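/- Let X = {-1,1}^ℕ, A(x) = h x₀ + x₀ Σ_{n≥1} aₙ xₙ with Σ|aₙ| < ∞, and set J_{ij} = a_{|i-j|}, h_i = h, and H_n(x,y) = Σ_{0≤i<j≤n-1} J_{ij} x_i x_j + Σ_{0≤i≤n-1} h x_i + Σ_{0≤i≤n-1, j≥n} J_{ij} x_i y_j. Then for all x, y ∈ X and all n ≥ 1: H_n(x,y) = Sₙ(A)([x|y]ₙ), where Sₙ(A) = Σ_{k=0}^{n-1} A ∘ σᵏ and [x|y]ₙ = (x₀,…,x_{n-1},yₙ,y_{n+1},…). -/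

import Mathlib

/-- The symbolic space `{-1,1}^ℕ`, with `true ↔ 1` and `false ↔ -1`. -/
abbrev Xsp : Type := ℕ → Bool

/-- The spin value of a symbol. -/
noncomputable def spin (b : Bool) : ℝ := if b then 1 else -1

/-- The left shift. -/
def shft (x : Xsp) : Xsp := fun n => x (n + 1)

/-- `[x|y]ₙ = (x₀,…,x_{n-1},yₙ,y_{n+1},…)`. -/
def pasteX (n : ℕ) (x y : Xsp) : Xsp := fun k => if k < n then x k else y k

/-- The Birkhoff sum `Sₙ(A) = Σ_{k<n} A ∘ σᵏ`. -/
noncomputable def birk (A : Xsp → ℝ) (n : ℕ) (z : Xsp) : ℝ :=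
  ∑ k ∈ Finset.range n, A (shft^[k] z)

/-- The Ising-type potential `A(z) = h z₀ + z₀ Σ_{m≥1} a_m z_m`. -/
noncomputable def isingPot (h : ℝ) (a : ℕ → ℝ) (z : Xsp) : ℝ :=
  h * spin (z 0) + spin (z 0) * ∑' m : ℕ, a (m + 1) * spin (z (m + 1))

/-- The Ising Hamiltonian with boundary condition `y`:
`Hₙ(x,y) = Σ_{0≤i<j≤n-1} a_{j-i} x_i x_j + Σ_{i<n} h x_i + Σ_{i<n, j≥n} a_{j-i} x_i y_j`. -/
noncomputable def isingH (h : ℝ) (a : ℕ → ℝ) (n : ℕ) (x y : Xsp) : ℝ :=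
  (∑ j ∈ Finset.range n, ∑ i ∈ Finset.range j, a (j - i) * spin (x i) * spin (x j))
    + (∑ i ∈ Finset.range n, h * spin (x i))
    + (∑ i ∈ Finset.range n, ∑' k : ℕ, a (n + k - i) * spin (x i) * spin (y (n + k)))

lemma spin_abs (b : Bool) : |spin b| = 1 := by
  unfold spin; cases b <;> simp

lemma shft_iter (k : ℕ) (z : Xsp) (m : ℕ) : (shft^[k] z) m = z (m + k) := by
  induction k generalizing z m with
  | zero => rfl
  | succ k ih =>
      rw [Function.iterate_succ_apply, ih]
      show z (m + k + 1) = z (m + (k + 1))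
      ring_nf

lemma summable_spin (a : ℕ → ℝ) (hsum : Summable fun m : ℕ => |a m|)
    (N : ℕ) (g : ℕ → ℝ) (hg : ∀ m, |g m| ≤ 1) :
    Summable fun m => a (m + N) * g m := by
  apply Summable.of_norm
  refine Summable.of_nonneg_of_le (fun _ => norm_nonneg _)
    (f := fun m => |a (m + N)|)
    (fun m => ?_) ((summable_nat_add_iff N).2 hsum)
  rw [Real.norm_eq_abs, abs_mul]
  calc |a (m + N)| * |g m| ≤ |a (m + N)| * 1 :=
        mul_le_mul_of_nonneg_left (hg m) (abs_nonneg _)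
    _ = |a (m + N)| := mul_one _

lemma pair_rearrange (n : ℕ) (F : ℕ → ℕ → ℝ) :
    ∑ j ∈ Finset.range n, ∑ i ∈ Finset.range j, F i j
      = ∑ k ∈ Finset.range n, ∑ m ∈ Finset.range (n - k - 1), F k (k + m + 1) := by
  rw [Finset.sum_sigma', Finset.sum_sigma']
  apply Finset.sum_nbij' (i := fun p => (⟨p.2, p.1 - p.2 - 1⟩ : Σ _ : ℕ, ℕ))
    (j := fun p => (⟨p.1 + p.2 + 1, p.1⟩ : Σ _ : ℕ, ℕ))
  · intro p hp
    simp only [Finset.mem_sigma, Finset.mem_range] at hp ⊢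
    omega
  · intro p hp
    simp only [Finset.mem_sigma, Finset.mem_range] at hp ⊢
    omega
  · rintro ⟨u, v⟩ hp
    simp only [Finset.mem_sigma, Finset.mem_range] at hp
    have e : v + (u - v - 1) + 1 = u := by omega
    simp [e]
  · rintro ⟨u, v⟩ hp
    simp only [Finset.mem_sigma, Finset.mem_range] at hp
    have e : u + v + 1 - u - 1 = v := by omega
    simp [e]
  · rintro ⟨u, v⟩ hp
    simp only [Finset.mem_sigma, Finset.mem_range] at hp
    have e : v + (u - v - 1) + 1 = u := by omega
    simp [e]

theorem ising_hamiltonian_eq_birkhoff_sum (h : ℝ) (a : ℕ → ℝ)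
    (hsum : Summable fun m : ℕ => |a m|) (n : ℕ) (hn : 1 ≤ n) (x y : Xsp) :
    isingH h a n x y = birk (isingPot h a) n (pasteX n x y) := by
  set z := pasteX n x y with hz
  have hzx : ∀ k, k < n → z k = x k := fun k hk => if_pos hk
  have hzy : ∀ k, n ≤ k → z k = y k := fun k hk => if_neg (by omega)
  have key : ∀ k ∈ Finset.range n,
      isingPot h a (shft^[k] z)
        = h * spin (x k)
          + ∑ m ∈ Finset.range (n - k - 1),
              a (m + 1) * spin (x k) * spin (x (k + m + 1))
          + ∑' t : ℕ, a (n + t - k) * spin (x k) * spin (y (n + t)) := by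
    intro k hk
    rw [Finset.mem_range] at hk
    have h0 : (shft^[k] z) 0 = x k := by
      rw [shft_iter, Nat.zero_add]; exact hzx k hk
    unfold isingPot
    rw [h0]
    have hfun : (fun m : ℕ => a (m + 1) * spin ((shft^[k] z) (m + 1)))
        = fun m : ℕ => a (m + 1) * spin (z (m + 1 + k)) := by
      funext m; rw [shft_iter]
    rw [hfun]
    have hsumm : Summable fun m : ℕ => a (m + 1) * spin (z (m + 1 + k)) :=
      summable_spin a hsum 1 _ (fun m => le_of_eq (spin_abs _))
    have hsplit := Summable.sum_add_tsum_nat_add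
      (f := fun m : ℕ => a (m + 1) * spin (z (m + 1 + k))) (n - k - 1) hsumm
    rw [← hsplit, mul_add]
    have hS : spin (x k) * ∑ m ∈ Finset.range (n - k - 1), a (m + 1) * spin (z (m + 1 + k))
        = ∑ m ∈ Finset.range (n - k - 1), a (m + 1) * spin (x k) * spin (x (k + m + 1)) := by
      rw [Finset.mul_sum]
      apply Finset.sum_congr rfl
      intro m hm
      rw [Finset.mem_range] at hm
      rw [hzx (m + 1 + k) (by omega)]
      have e : m + 1 + k = k + m + 1 := by omega
      rw [e]; ring
    have hT : spin (x k) * ∑' t : ℕ,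
          (fun m : ℕ => a (m + 1) * spin (z (m + 1 + k))) (t + (n - k - 1))
        = ∑' t : ℕ, a (n + t - k) * spin (x k) * spin (y (n + t)) := by
      rw [← tsum_mul_left]
      apply tsum_congr
      intro t
      simp only []
      have e1 : t + (n - k - 1) + 1 = n + t - k := by omega
      rw [e1]
      have e2 : n + t - k + k = n + t := by omega
      rw [e2, hzy (n + t) (by omega)]
      ring
    rw [hS, hT, add_assoc]
  unfold birk
  rw [Finset.sum_congr rfl key]
  rw [Finset.sum_add_distrib, Finset.sum_add_distrib]
  unfold isingH
  rw [pair_rearrange n (fun i j => a (j - i) * spin (x i) * spin (x j))]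
  have hp : ∀ k ∈ Finset.range n,
      ∑ m ∈ Finset.range (n - k - 1), a (k + m + 1 - k) * spin (x k) * spin (x (k + m + 1))
        = ∑ m ∈ Finset.range (n - k - 1), a (m + 1) * spin (x k) * spin (x (k + m + 1)) := by
    intro k _
    apply Finset.sum_congr rfl
    intro m _
    have e : k + m + 1 - k = m + 1 := by omega
    rw [e]
  rw [Finset.sum_congr rfl hp]
  ring
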